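/- Let X ∈ ℝ^{N×T} be a real matrix and let ρ be an integer with ρ ≥ rank(X). Then the infimum of (1/2)(‖P‖_F² + ‖Q‖_F²) over all P ∈ ℝ^{N×ρ} and Q ∈ ℝ^{T×ρ} satisfying X = P Qᵀ equals ‖X‖_*, and the infimum is attained. -/

import Mathlib

open Matrix

lemma transpose_mul_self_isHermitian {N T : ℕ} (X : Matrix (Fin N) (Fin T) ℝ) :
    (Xᵀ * X).IsHermitian := by
  have := Matrix.isHermitian_conjTranspose_mul_self X
  first
  | simpa [Matrix.conjTranspose_eq_transpose_of_trivial] using this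
  | simpa [Matrix.conjTranspose, starRingEnd_apply, star_trivial] using this

/-- Nuclear norm: sum of singular values (square roots of eigenvalues of `XᵀX`). -/
noncomputable def nuclearNorm {N T : ℕ} (X : Matrix (Fin N) (Fin T) ℝ) : ℝ :=
  ∑ i, Real.sqrt ((transpose_mul_self_isHermitian X).eigenvalues i)

/-- Frobenius norm `‖X‖_F = √(trace (XᵀX))`. -/
noncomputable def frobeniusNorm {N T : ℕ} (X : Matrix (Fin N) (Fin T) ℝ) : ℝ :=
  Real.sqrt (Matrix.trace (Xᵀ * X))


namespace NucAux
variable {N T : ℕ} (X : Matrix (Fin N) (Fin T) ℝ)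

noncomputable def lam : Fin T → ℝ := (transpose_mul_self_isHermitian X).eigenvalues
noncomputable def V : Matrix (Fin T) (Fin T) ℝ := (transpose_mul_self_isHermitian X).eigenvectorUnitary

lemma lam_nonneg (t : Fin T) : 0 ≤ lam X t := by
  have h : (Xᵀ * X).PosSemidef := by
    have := Matrix.posSemidef_conjTranspose_mul_self X
    simpa [Matrix.conjTranspose_eq_transpose_of_trivial] using this
  exact h.eigenvalues_nonneg t

lemma VtV : (V X)ᵀ * V X = 1 := by
  have := Matrix.mem_unitaryGroup_iff'.mp ((transpose_mul_self_isHermitian X).eigenvectorUnitary).2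
  simpa [V, Matrix.star_eq_conjTranspose, Matrix.conjTranspose_eq_transpose_of_trivial] using this

lemma VVt : V X * (V X)ᵀ = 1 := by
  have := Matrix.mem_unitaryGroup_iff.mp ((transpose_mul_self_isHermitian X).eigenvectorUnitary).2
  simpa [V, Matrix.star_eq_conjTranspose, Matrix.conjTranspose_eq_transpose_of_trivial] using this

lemma AV : (Xᵀ * X) * V X = V X * Matrix.diagonal (lam X) := by
  have h := (transpose_mul_self_isHermitian X).spectral_theorem
  have h2 : (Xᵀ * X) = V X * Matrix.diagonal (lam X) * (V X)ᵀ := by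
    simpa [V, lam, Matrix.star_eq_conjTranspose, Matrix.conjTranspose_eq_transpose_of_trivial,
      Function.comp] using h
  rw [h2, Matrix.mul_assoc, Matrix.mul_assoc, VtV, Matrix.mul_one]

end NucAux

namespace NucAux2
open NucAux
variable {N T : ℕ} (X : Matrix (Fin N) (Fin T) ℝ)

/-- the `t`-th eigenvector (column of `V`). -/
noncomputable def vv (t : Fin T) : Fin T → ℝ := fun i => V X i t

noncomputable def sig (t : Fin T) : ℝ := Real.sqrt (lam X t)

lemma sig_nonneg (t : Fin T) : 0 ≤ sig X t := Real.sqrt_nonneg _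

lemma sig_sq (t : Fin T) : sig X t ^ 2 = lam X t := Real.sq_sqrt (lam_nonneg X t)

lemma v_dot_v (s t : Fin T) : vv X s ⬝ᵥ vv X t = if s = t then 1 else 0 := by
  have := congrFun (congrFun (VtV X) s) t
  simpa [Matrix.mul_apply, Matrix.one_apply, vv, dotProduct, Matrix.transpose_apply] using this

lemma mulVec_dot (a b : Fin T → ℝ) : (X *ᵥ a) ⬝ᵥ (X *ᵥ b) = a ⬝ᵥ ((Xᵀ * X) *ᵥ b) := by
  rw [← Matrix.mulVec_mulVec, Matrix.dotProduct_mulVec, ← Matrix.mulVec_transpose,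
    dotProduct_comm, Matrix.mulVec_mulVec, Matrix.dotProduct_mulVec,
    ← Matrix.mulVec_transpose, Matrix.transpose_mul, Matrix.transpose_transpose,
    dotProduct_comm, ← Matrix.mulVec_mulVec]

lemma A_mulVec (t : Fin T) : (Xᵀ * X) *ᵥ vv X t = lam X t • vv X t := by
  funext i
  have := congrFun (congrFun (AV X) i) t
  simpa [Matrix.mul_apply, Matrix.mulVec, dotProduct, vv, Matrix.diagonal, mul_comm] using this

lemma Xv_dot_Xv (s t : Fin T) :
    (X *ᵥ vv X s) ⬝ᵥ (X *ᵥ vv X t) = if s = t then lam X t else 0 := by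
  rw [mulVec_dot, A_mulVec, dotProduct_smul, smul_eq_mul, v_dot_v]
  by_cases h : s = t <;> simp [h]

lemma Xv_eq_zero {t : Fin T} (h : lam X t = 0) : X *ᵥ vv X t = 0 := by
  have h2 := Xv_dot_Xv X t t
  simpa [h] using h2

lemma nuclearNorm_eq : nuclearNorm X = ∑ t, sig X t := rfl

lemma frobeniusNorm_sq {m n : ℕ} (P : Matrix (Fin m) (Fin n) ℝ) :
    frobeniusNorm P ^ 2 = ∑ j, ∑ i, P i j ^ 2 := by
  have h : Matrix.trace (Pᵀ * P) = ∑ j, ∑ i, P i j ^ 2 := by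
    simp [Matrix.trace, Matrix.diag, Matrix.mul_apply, sq]
  rw [frobeniusNorm, Real.sq_sqrt, h]
  rw [h]
  positivity

end NucAux2

section Helpers

lemma sum_dite_embed {c ρ : ℕ} (h : c ≤ ρ) (g : Fin c → ℝ) :
    ∑ k : Fin ρ, (if hk : (k : ℕ) < c then g ⟨k, hk⟩ else 0) = ∑ k : Fin c, g k := by
  set F : ℕ → ℝ := fun n => if hn : n < c then g ⟨n, hn⟩ else 0 with hF
  have h1 : ∑ k : Fin ρ, (if hk : (k : ℕ) < c then g ⟨k, hk⟩ else 0) = ∑ n ∈ Finset.range ρ, F n :=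
    Fin.sum_univ_eq_sum_range F ρ
  have h2 : ∑ n ∈ Finset.range ρ, F n = ∑ n ∈ Finset.range c, F n := by
    refine (Finset.sum_subset (Finset.range_subset_range.mpr h) ?_).symm
    intro x _ hx
    simp only [Finset.mem_range] at hx
    simp [hF, hx]
  have h3 : ∑ n ∈ Finset.range c, F n = ∑ k : Fin c, g k := by
    rw [← Fin.sum_univ_eq_sum_range F c]
    exact Finset.sum_congr rfl fun k _ => by simp [hF, k.isLt]
  rw [h1, h2, h3]

lemma sum_col {T ρ : ℕ} (S : Finset (Fin T)) (h : S.card ≤ ρ) (G : Fin T → ℝ) :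
    ∑ k : Fin ρ, (if hk : (k : ℕ) < S.card then G (S.orderIsoOfFin rfl ⟨k, hk⟩) else 0)
      = ∑ t ∈ S, G t := by
  refine (sum_dite_embed h fun k => G (S.orderIsoOfFin rfl k)).trans ?_
  rw [← Finset.sum_coe_sort S G]
  exact Fintype.sum_equiv (S.orderIsoOfFin rfl).toEquiv _ _ (fun k => rfl)

end Helpers

namespace NucAux2
open NucAux
variable {N T : ℕ} (X : Matrix (Fin N) (Fin T) ℝ)

lemma sum_X_vv (i : Fin N) (j : Fin T) :
    ∑ t, (X *ᵥ vv X t) i * vv X t j = X i j := by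
  have h2 : X * V X * (V X)ᵀ = X := by rw [Matrix.mul_assoc, VVt, Matrix.mul_one]
  have h3 := congrFun (congrFun h2 i) j
  rw [← h3]
  simp [Matrix.mul_apply, Matrix.mulVec, dotProduct, vv, Finset.sum_mul]

lemma membership {ρ : ℕ} (hρ : X.rank ≤ ρ) :
    ∃ (P : Matrix (Fin N) (Fin ρ) ℝ) (Q : Matrix (Fin T) (Fin ρ) ℝ),
      X = P * Qᵀ ∧ nuclearNorm X = (1 / 2) * (frobeniusNorm P ^ 2 + frobeniusNorm Q ^ 2) := by
  classical
  set S : Finset (Fin T) := Finset.univ.filter (fun t => lam X t ≠ 0) with hS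
  have hcard : S.card ≤ ρ := by
    have h1 : (Xᵀ * X).rank = X.rank := Matrix.rank_transpose_mul_self X
    have h2 := (transpose_mul_self_isHermitian X).rank_eq_card_non_zero_eigs
    have h2' : (Xᵀ * X).rank = Fintype.card {i // lam X i ≠ 0} := h2
    have h3 : Fintype.card {i // lam X i ≠ 0} = S.card := Fintype.card_subtype _
    omega
  have hsigpos : ∀ t ∈ S, 0 < sig X t := by
    intro t ht
    have : lam X t ≠ 0 := by simpa [hS] using ht
    exact Real.sqrt_pos.mpr (lt_of_le_of_ne (lam_nonneg X t) (Ne.symm this))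
  have hsig0 : ∀ t ∉ S, sig X t = 0 := by
    intro t ht
    have : lam X t = 0 := by simpa [hS] using ht
    simp [sig, this]
  set e : Fin S.card → Fin T := fun k => (S.orderIsoOfFin rfl k : Fin T) with he
  have heS : ∀ k, e k ∈ S := fun k => (S.orderIsoOfFin rfl k).2
  set P : Matrix (Fin N) (Fin ρ) ℝ := fun i k =>
    if hk : (k : ℕ) < S.card then
      (X *ᵥ vv X (e ⟨k, hk⟩)) i / Real.sqrt (sig X (e ⟨k, hk⟩)) else 0 with hP
  set Q : Matrix (Fin T) (Fin ρ) ℝ := fun j k =>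
    if hk : (k : ℕ) < S.card then
      Real.sqrt (sig X (e ⟨k, hk⟩)) * vv X (e ⟨k, hk⟩) j else 0 with hQ
  have hXv_sq : ∀ t, ∑ i, (X *ᵥ vv X t) i ^ 2 = lam X t := by
    intro t
    have := Xv_dot_Xv X t t
    simpa [dotProduct, sq] using this
  have hvv_sq : ∀ t, ∑ j, vv X t j ^ 2 = 1 := by
    intro t
    have := v_dot_v X t t
    simpa [dotProduct, sq] using this
  refine ⟨P, Q, ?_, ?_⟩
  · ext i j
    rw [Matrix.mul_apply]
    have hterm : ∀ k : Fin ρ, P i k * Qᵀ k j =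
        if hk : (k : ℕ) < S.card then
          (X *ᵥ vv X (e ⟨k, hk⟩)) i * vv X (e ⟨k, hk⟩) j else 0 := by
      intro k
      by_cases hk : (k : ℕ) < S.card
      · have hs : Real.sqrt (sig X (e ⟨k, hk⟩)) ≠ 0 :=
          ne_of_gt (Real.sqrt_pos.mpr (hsigpos _ (heS _)))
        rw [Matrix.transpose_apply]
        simp only [hP, hQ, Matrix.transpose_apply, dif_pos hk]
        rw [← mul_assoc, div_mul_cancel₀ _ hs]
      · simp [hP, hQ, dif_neg hk]
    rw [Finset.sum_congr rfl fun k _ => hterm k]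
    rw [sum_col S hcard (fun t => (X *ᵥ vv X t) i * vv X t j)]
    rw [Finset.sum_subset (S.subset_univ)]
    · exact (sum_X_vv X i j).symm
    · intro t _ ht
      have : lam X t = 0 := by simpa [hS] using ht
      rw [Xv_eq_zero X this]
      simp
  · have hPn : frobeniusNorm P ^ 2 = nuclearNorm X := by
      rw [frobeniusNorm_sq]
      have hcol : ∀ k : Fin ρ, ∑ i, P i k ^ 2 =
          if hk : (k : ℕ) < S.card then sig X (e ⟨k, hk⟩) else 0 := by
        intro k
        by_cases hk : (k : ℕ) < S.card
        · have hσ := hsigpos _ (heS ⟨k, hk⟩)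
          simp only [hP, dif_pos hk, div_pow, ← Finset.sum_div]
          rw [hXv_sq, Real.sq_sqrt (sig_nonneg X _), ← sig_sq, sq, mul_div_assoc,
            div_self (ne_of_gt hσ), mul_one]
        · simp [hP, dif_neg hk]
      rw [Finset.sum_congr rfl fun k _ => hcol k, sum_col S hcard (fun t => sig X t)]
      rw [Finset.sum_subset (S.subset_univ) (fun t _ ht => hsig0 t ht)]
      exact (nuclearNorm_eq X).symm
    have hQn : frobeniusNorm Q ^ 2 = nuclearNorm X := by
      rw [frobeniusNorm_sq]
      have hcol : ∀ k : Fin ρ, ∑ j, Q j k ^ 2 =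
          if hk : (k : ℕ) < S.card then sig X (e ⟨k, hk⟩) else 0 := by
        intro k
        by_cases hk : (k : ℕ) < S.card
        · simp only [hQ, dif_pos hk, mul_pow, ← Finset.mul_sum]
          rw [hvv_sq, Real.sq_sqrt (sig_nonneg X _), mul_one]
        · simp [hQ, dif_neg hk]
      rw [Finset.sum_congr rfl fun k _ => hcol k, sum_col S hcard (fun t => sig X t)]
      rw [Finset.sum_subset (S.subset_univ) (fun t _ ht => hsig0 t ht)]
      exact (nuclearNorm_eq X).symm
    rw [hPn, hQn]
    ring

end NucAux2

namespace NucAux2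
open NucAux
variable {N T : ℕ} (X : Matrix (Fin N) (Fin T) ℝ)

lemma trace_transpose_mul_self_eq {m n : ℕ} (M : Matrix (Fin m) (Fin n) ℝ) :
    Matrix.trace (Mᵀ * M) = ∑ j, ∑ i, M i j ^ 2 := by
  simp [Matrix.trace, Matrix.diag, Matrix.mul_apply, sq]

lemma trace_transpose_mul_self_nonneg {m n : ℕ} (M : Matrix (Fin m) (Fin n) ℝ) :
    0 ≤ Matrix.trace (Mᵀ * M) := by
  rw [trace_transpose_mul_self_eq]
  positivity

lemma frob_sq_eq_trace {m n : ℕ} (M : Matrix (Fin m) (Fin n) ℝ) :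
    frobeniusNorm M ^ 2 = Matrix.trace (Mᵀ * M) :=
  Real.sq_sqrt (trace_transpose_mul_self_nonneg M)

lemma dot_le_half (ρ : ℕ) (a b : Fin ρ → ℝ) :
    a ⬝ᵥ b ≤ (1 / 2) * (a ⬝ᵥ a + b ⬝ᵥ b) := by
  have h : 0 ≤ ∑ k, (a k - b k) ^ 2 := Finset.sum_nonneg fun k _ => sq_nonneg _
  have hexp : ∑ k, (a k - b k) ^ 2 = a ⬝ᵥ a - 2 * (a ⬝ᵥ b) + b ⬝ᵥ b := by
    simp only [dotProduct, ← Finset.sum_add_distrib, ← Finset.sum_sub_distrib, Finset.mul_sum]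
    exact Finset.sum_congr rfl fun k _ => by ring
  linarith

/-- the left singular vectors (scaled). -/
noncomputable def uu (t : Fin T) : Fin N → ℝ := (sig X t)⁻¹ • (X *ᵥ vv X t)

lemma uu_dot_Xv (t : Fin T) : uu X t ⬝ᵥ (X *ᵥ vv X t) = sig X t := by
  rw [uu, smul_dotProduct, Xv_dot_Xv]
  simp only [if_pos rfl, smul_eq_mul]
  by_cases h : lam X t = 0
  · simp [sig, h]
  · have hσ : sig X t ≠ 0 := ne_of_gt (Real.sqrt_pos.mpr
      (lt_of_le_of_ne (lam_nonneg X t) (Ne.symm h)))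
    rw [← sig_sq X t, sq]
    field_simp
    simp

lemma uu_dot_uu (s t : Fin T) :
    uu X s ⬝ᵥ uu X t = if s = t then (if lam X t ≠ 0 then 1 else 0) else 0 := by
  rw [uu, uu, smul_dotProduct, dotProduct_smul, Xv_dot_Xv]
  by_cases hst : s = t
  · subst hst
    by_cases h : lam X s = 0
    · simp [h]
    · have hσ : sig X s ≠ 0 := ne_of_gt (Real.sqrt_pos.mpr
        (lt_of_le_of_ne (lam_nonneg X s) (Ne.symm h)))
      rw [if_pos rfl, if_pos rfl, if_pos h]
      rw [← sig_sq X s, sq]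
      field_simp
      simp only [smul_eq_mul]
      field_simp
  · simp [hst]

lemma uu_zero {t : Fin T} (h : lam X t = 0) : uu X t = 0 := by
  rw [uu, Xv_eq_zero X h, smul_zero]

end NucAux2

namespace NucAux2
open NucAux
variable {N T : ℕ} (X : Matrix (Fin N) (Fin T) ℝ)

/-- matrix of left singular vectors as columns. -/
noncomputable def U : Matrix (Fin N) (Fin T) ℝ := fun i t => uu X t i

noncomputable def dd : Fin T → ℝ := fun t => if lam X t ≠ 0 then 1 else 0

lemma UtU : (U X)ᵀ * U X = Matrix.diagonal (dd X) := by
  ext s t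
  have := uu_dot_uu X s t
  simp only [Matrix.mul_apply, Matrix.transpose_apply, Matrix.diagonal, Matrix.of_apply]
  rw [show ∑ i, U X i s * U X i t = uu X s ⬝ᵥ uu X t from rfl, this, dd]
  by_cases h : s = t <;> simp [h]

lemma UdUt : U X * Matrix.diagonal (dd X) * (U X)ᵀ = U X * (U X)ᵀ := by
  ext i j
  rw [Matrix.mul_apply, Matrix.mul_apply]
  refine Finset.sum_congr rfl fun t _ => ?_
  rw [Matrix.mul_diagonal]
  by_cases h : lam X t = 0
  · have hz : U X i t = 0 := by rw [U, uu_zero X h]; rfl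
    simp [hz]
  · simp [dd, h]

lemma trace_key {n m ρ : ℕ} (W : Matrix (Fin n) (Fin m) ℝ)
    (hW : W * Wᵀ * (W * Wᵀ) = W * Wᵀ) (P : Matrix (Fin n) (Fin ρ) ℝ) :
    Matrix.trace ((Pᵀ * W)ᵀ * (Pᵀ * W)) ≤ Matrix.trace (Pᵀ * P) := by
  set B : Matrix (Fin n) (Fin n) ℝ := 1 - W * Wᵀ with hB
  have hBt : Bᵀ = B := by
    rw [hB, Matrix.transpose_sub, Matrix.transpose_one, Matrix.transpose_mul,
      Matrix.transpose_transpose]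
  have hBB : B * B = B := by
    rw [hB]
    simp only [Matrix.sub_mul, Matrix.mul_sub, Matrix.one_mul, Matrix.mul_one, hW]
    abel
  have hpos : 0 ≤ Matrix.trace (Pᵀ * (B * P)) := by
    have h1 : (B * P)ᵀ * (B * P) = Pᵀ * (B * P) := by
      rw [Matrix.transpose_mul, hBt, Matrix.mul_assoc, ← Matrix.mul_assoc B B P, hBB]
    rw [← h1]
    exact trace_transpose_mul_self_nonneg _
  have hsplit : Matrix.trace (Pᵀ * (B * P)) =
      Matrix.trace (Pᵀ * P) - Matrix.trace ((Pᵀ * W)ᵀ * (Pᵀ * W)) := by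
    rw [hB, Matrix.sub_mul, Matrix.mul_sub, Matrix.one_mul, Matrix.trace_sub]
    congr 1
    rw [Matrix.transpose_mul, Matrix.transpose_transpose]
    rw [show Pᵀ * (W * Wᵀ * P) = (Pᵀ * W) * (Wᵀ * P) by
      simp only [Matrix.mul_assoc]]
    rw [Matrix.trace_mul_comm]
  linarith

end NucAux2

namespace NucAux2
open NucAux
variable {N T : ℕ} (X : Matrix (Fin N) (Fin T) ℝ)

lemma U_idem : U X * (U X)ᵀ * (U X * (U X)ᵀ) = U X * (U X)ᵀ := by
  calc U X * (U X)ᵀ * (U X * (U X)ᵀ)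
      = U X * ((U X)ᵀ * U X) * (U X)ᵀ := by simp only [Matrix.mul_assoc]
    _ = U X * Matrix.diagonal (dd X) * (U X)ᵀ := by rw [UtU]
    _ = U X * (U X)ᵀ := UdUt X

lemma V_idem : V X * (V X)ᵀ * (V X * (V X)ᵀ) = V X * (V X)ᵀ := by
  rw [VVt]; simp

lemma lowerBound {ρ : ℕ} (P : Matrix (Fin N) (Fin ρ) ℝ) (Q : Matrix (Fin T) (Fin ρ) ℝ)
    (hX : X = P * Qᵀ) :
    nuclearNorm X ≤ (1 / 2) * (frobeniusNorm P ^ 2 + frobeniusNorm Q ^ 2) := by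
  have h1 : ∀ t, sig X t = (Pᵀ *ᵥ uu X t) ⬝ᵥ (Qᵀ *ᵥ vv X t) := by
    intro t
    calc sig X t = uu X t ⬝ᵥ (X *ᵥ vv X t) := (uu_dot_Xv X t).symm
      _ = uu X t ⬝ᵥ ((P * Qᵀ) *ᵥ vv X t) := by rw [← hX]
      _ = (Pᵀ *ᵥ uu X t) ⬝ᵥ (Qᵀ *ᵥ vv X t) := by
          rw [← Matrix.mulVec_mulVec, Matrix.dotProduct_mulVec, ← Matrix.mulVec_transpose P]
  have h2 : ∀ t, sig X t ≤ (1 / 2) * ((Pᵀ *ᵥ uu X t) ⬝ᵥ (Pᵀ *ᵥ uu X t)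
      + (Qᵀ *ᵥ vv X t) ⬝ᵥ (Qᵀ *ᵥ vv X t)) := by
    intro t
    rw [h1 t]
    exact dot_le_half ρ _ _
  have hPside : ∑ t, (Pᵀ *ᵥ uu X t) ⬝ᵥ (Pᵀ *ᵥ uu X t) ≤ frobeniusNorm P ^ 2 := by
    have heq : ∀ t, (Pᵀ *ᵥ uu X t) ⬝ᵥ (Pᵀ *ᵥ uu X t) = ∑ k, (Pᵀ * U X) k t ^ 2 := by
      intro t
      simp [dotProduct, Matrix.mulVec, Matrix.mul_apply, U, sq]
    rw [Finset.sum_congr rfl fun t _ => heq t, ← trace_transpose_mul_self_eq,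
      frob_sq_eq_trace]
    exact trace_key (U X) (U_idem X) P
  have hQside : ∑ t, (Qᵀ *ᵥ vv X t) ⬝ᵥ (Qᵀ *ᵥ vv X t) ≤ frobeniusNorm Q ^ 2 := by
    have heq : ∀ t, (Qᵀ *ᵥ vv X t) ⬝ᵥ (Qᵀ *ᵥ vv X t) = ∑ k, (Qᵀ * V X) k t ^ 2 := by
      intro t
      simp [dotProduct, Matrix.mulVec, Matrix.mul_apply, vv, sq]
    rw [Finset.sum_congr rfl fun t _ => heq t, ← trace_transpose_mul_self_eq,
      frob_sq_eq_trace]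
    exact trace_key (V X) (V_idem X) Q
  calc nuclearNorm X = ∑ t, sig X t := nuclearNorm_eq X
    _ ≤ ∑ t, (1 / 2) * ((Pᵀ *ᵥ uu X t) ⬝ᵥ (Pᵀ *ᵥ uu X t)
        + (Qᵀ *ᵥ vv X t) ⬝ᵥ (Qᵀ *ᵥ vv X t)) := Finset.sum_le_sum fun t _ => h2 t
    _ = (1 / 2) * (∑ t, (Pᵀ *ᵥ uu X t) ⬝ᵥ (Pᵀ *ᵥ uu X t)
        + ∑ t, (Qᵀ *ᵥ vv X t) ⬝ᵥ (Qᵀ *ᵥ vv X t)) := by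
        rw [← Finset.mul_sum, Finset.sum_add_distrib]
    _ ≤ (1 / 2) * (frobeniusNorm P ^ 2 + frobeniusNorm Q ^ 2) := by
        have := add_le_add hPside hQside
        linarith

end NucAux2

/-- for `ρ ≥ rank X`, the infimum of `(1/2)(‖P‖_F² + ‖Q‖_F²)` over all
factorizations `X = P Qᵀ` with `P ∈ ℝ^{N×ρ}`, `Q ∈ ℝ^{T×ρ}` equals `‖X‖_*` and is attained.
(`IsLeast` expresses precisely that the value is the attained infimum.) -/
theorem nuclearNorm_isLeast_factorization {N T ρ : ℕ} (X : Matrix (Fin N) (Fin T) ℝ)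
    (hρ : X.rank ≤ ρ) :
    IsLeast {v : ℝ | ∃ (P : Matrix (Fin N) (Fin ρ) ℝ) (Q : Matrix (Fin T) (Fin ρ) ℝ),
        X = P * Qᵀ ∧ v = (1 / 2) * (frobeniusNorm P ^ 2 + frobeniusNorm Q ^ 2)}
      (nuclearNorm X) := by
  constructor
  · obtain ⟨P, Q, h1, h2⟩ := NucAux2.membership X hρ
    exact ⟨P, Q, h1, h2⟩
  · rintro v ⟨P, Q, hX, hv⟩
    rw [hv]
    exact NucAux2.lowerBound X P Q hX
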